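/- arXiv:0910.1038 — 4 statements merged into one kernel-verified Lean document; each statement's English description precedes it below -/
import Mathlib

section
/- Let M be a model category which is left proper and in which, for every weak equivalence w : X' → X, the coproduct morphism w ⊔ w : X' ⊔ X' → X ⊔ X is again a weak equivalence. Then the cylinder-homotopy relation ∼ is a congruence on the full subcategory Fib(M) of fibrant objects, and the canonical functor Fib(M)/∼ → Ho Fib(M) from the quotient category to the homotopy category (the localization of Fib(M) at its weak equivalences) is faithful. -/
open CategoryTheory CategoryTheory.Limits

universe v u

/-- A (closed) model structure on a category `C` with finite limits and colimits,
in the sense of Quillen: classes of cofibrations, fibrations and weak equivalences,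
containing all isomorphisms, satisfying two-out-of-three for weak equivalences,
closure under retracts, the lifting axioms and the factorization axioms. -/
structure ModelStructure (C : Type u) [Category.{v} C]
    [HasFiniteLimits C] [HasFiniteColimits C] where
  cof : MorphismProperty C
  fib : MorphismProperty C
  weq : MorphismProperty C
  cof_of_isIso : ∀ {X Y : C} (f : X ⟶ Y), IsIso f → cof f
  fib_of_isIso : ∀ {X Y : C} (f : X ⟶ Y), IsIso f → fib f
  weq_of_isIso : ∀ {X Y : C} (f : X ⟶ Y), IsIso f → weq f
  weq_comp : ∀ {X Y Z : C} (f : X ⟶ Y) (g : Y ⟶ Z), weq f → weq g → weq (f ≫ g)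
  weq_of_comp_left : ∀ {X Y Z : C} (f : X ⟶ Y) (g : Y ⟶ Z), weq f → weq (f ≫ g) → weq g
  weq_of_comp_right : ∀ {X Y Z : C} (f : X ⟶ Y) (g : Y ⟶ Z), weq g → weq (f ≫ g) → weq f
  cof_retract : ∀ {A B A' B' : C} (f : A ⟶ B) (g : A' ⟶ B')
    (iA : A ⟶ A') (rA : A' ⟶ A) (iB : B ⟶ B') (rB : B' ⟶ B),
    iA ≫ rA = 𝟙 A → iB ≫ rB = 𝟙 B → iA ≫ g = f ≫ iB → g ≫ rB = rA ≫ f → cof g → cof f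
  fib_retract : ∀ {A B A' B' : C} (f : A ⟶ B) (g : A' ⟶ B')
    (iA : A ⟶ A') (rA : A' ⟶ A) (iB : B ⟶ B') (rB : B' ⟶ B),
    iA ≫ rA = 𝟙 A → iB ≫ rB = 𝟙 B → iA ≫ g = f ≫ iB → g ≫ rB = rA ≫ f → fib g → fib f
  weq_retract : ∀ {A B A' B' : C} (f : A ⟶ B) (g : A' ⟶ B')
    (iA : A ⟶ A') (rA : A' ⟶ A) (iB : B ⟶ B') (rB : B' ⟶ B),
    iA ≫ rA = 𝟙 A → iB ≫ rB = 𝟙 B → iA ≫ g = f ≫ iB → g ≫ rB = rA ≫ f → weq g → weq f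
  lift_of_weq_cof : ∀ {A B X Y : C} (i : A ⟶ B) (p : X ⟶ Y),
    cof i → weq i → fib p → HasLiftingProperty i p
  lift_of_weq_fib : ∀ {A B X Y : C} (i : A ⟶ B) (p : X ⟶ Y),
    cof i → fib p → weq p → HasLiftingProperty i p
  factor_cof_triv_fib : ∀ {X Y : C} (f : X ⟶ Y),
    ∃ (Z : C) (i : X ⟶ Z) (p : Z ⟶ Y), cof i ∧ fib p ∧ weq p ∧ i ≫ p = f
  factor_triv_cof_fib : ∀ {X Y : C} (f : X ⟶ Y),
    ∃ (Z : C) (i : X ⟶ Z) (p : Z ⟶ Y), cof i ∧ weq i ∧ fib p ∧ i ≫ p = f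

namespace ModelStructure

variable {C : Type u} [Category.{v} C] [HasFiniteLimits C] [HasFiniteColimits C]
  (M : ModelStructure C)

/-- An object is fibrant if the unique morphism to the terminal object is a fibration. -/
def Fibrant (X : C) : Prop := M.fib (terminal.from X)

/-- An object is cofibrant if the unique morphism from the initial object is a cofibration. -/
def Cofibrant (X : C) : Prop := M.cof (initial.to X)

/-- A cylinder for `X`: a cofibration `ins : X ⊔ X ⟶ Z` and a weak equivalence `p : Z ⟶ X`
whose composite is the fold map. -/
structure Cylinder (X : C) where
  Z : C
  ins : (X ⨿ X) ⟶ Z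
  p : Z ⟶ X
  cof_ins : M.cof ins
  weq_p : M.weq p
  ins_p : ins ≫ p = coprod.desc (𝟙 X) (𝟙 X)

/-- `f` and `g` are cylinder homotopic if there is a cylinder homotopy from `f` to `g`. -/
def CylinderHomotopic {X Y : C} (f g : X ⟶ Y) : Prop :=
  ∃ (cyl : M.Cylinder X) (H : cyl.Z ⟶ Y),
    coprod.inl ≫ cyl.ins ≫ H = f ∧ coprod.inr ≫ cyl.ins ≫ H = g

/-- A path object for `Y`: a weak equivalence `s : Y ⟶ P` and a fibration `pr : P ⟶ Y ⨯ Y`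
whose composite is the diagonal. -/
structure PathObject (Y : C) where
  P : C
  pr : P ⟶ (Y ⨯ Y)
  s : Y ⟶ P
  fib_pr : M.fib pr
  weq_s : M.weq s
  s_pr : s ≫ pr = prod.lift (𝟙 Y) (𝟙 Y)

/-- `f` and `g` are path homotopic if there is a path homotopy from `f` to `g`. -/
def PathHomotopic {X Y : C} (f g : X ⟶ Y) : Prop :=
  ∃ (po : M.PathObject Y) (K : X ⟶ po.P),
    K ≫ po.pr ≫ prod.fst = f ∧ K ≫ po.pr ≫ prod.snd = g

/-- Left properness: weak equivalences are closed under pushouts along cofibrations. -/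
def LeftProper : Prop :=
  ∀ ⦃A B X P : C⦄ (f : A ⟶ X) (g : A ⟶ B) (h : X ⟶ P) (k : B ⟶ P),
    IsPushout f g h k → M.cof g → M.weq f → M.weq k

/-- Right properness: weak equivalences are closed under pullbacks along fibrations. -/
def RightProper : Prop :=
  ∀ ⦃P X Y B : C⦄ (fst : P ⟶ X) (snd : P ⟶ Y) (f : X ⟶ B) (g : Y ⟶ B),
    IsPullback fst snd f g → M.fib g → M.weq f → M.weq snd

/-- The weak equivalences of the full subcategory of fibrant objects. -/
def weqFib : MorphismProperty (ObjectProperty.FullSubcategory M.Fibrant) := fun _ _ f => M.weq f.hom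

/-- The cylinder homotopy relation on the full subcategory of fibrant objects. -/
def cylRel : HomRel (ObjectProperty.FullSubcategory M.Fibrant) :=
  fun {X Y} f g => M.CylinderHomotopic (X := X.obj) (Y := Y.obj) f.hom g.hom

/-- The weak equivalences of the full subcategory of cofibrant objects. -/
def weqCof : MorphismProperty (ObjectProperty.FullSubcategory M.Cofibrant) := fun _ _ f => M.weq f.hom

/-- The path homotopy relation on the full subcategory of cofibrant objects. -/
def pathRel : HomRel (ObjectProperty.FullSubcategory M.Cofibrant) :=
  fun {X Y} f g => M.PathHomotopic (X := X.obj) (Y := Y.obj) f.hom g.hom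

end ModelStructure

namespace ModelStructure

variable {C : Type u} [Category.{v} C] [HasFiniteLimits C] [HasFiniteColimits C]
  (M : ModelStructure C)

attribute [local simp] coprod.inl_desc coprod.inr_desc coprod.inl_desc_assoc coprod.inr_desc_assoc
attribute [local simp] pushout.inl_desc pushout.inr_desc pushout.inl_desc_assoc pushout.inr_desc_assoc
attribute [local simp] pullback.lift_fst pullback.lift_snd pullback.lift_fst_assoc pullback.lift_snd_assoc

lemma weq_id (X : C) : M.weq (𝟙 X) := M.weq_of_isIso _ inferInstance

/-! ### Characterizations of the classes by lifting properties (retract argument) -/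

lemma cof_of_llp {A B : C} {i : A ⟶ B}
    (h : ∀ {X Y : C} (p : X ⟶ Y), M.fib p → M.weq p → HasLiftingProperty i p) :
    M.cof i := by
  obtain ⟨Z, c, q, hc, hq, hwq, hfac⟩ := M.factor_cof_triv_fib i
  haveI := h q hq hwq
  have sq : CommSq c i q (𝟙 B) := ⟨by simp [hfac]⟩
  exact M.cof_retract i c (𝟙 A) (𝟙 A) sq.lift q (by simp) sq.fac_right
    (by simp [sq.fac_left]) (by simp [hfac]) hc

lemma triv_cof_of_llp {A B : C} {i : A ⟶ B}
    (h : ∀ {X Y : C} (p : X ⟶ Y), M.fib p → HasLiftingProperty i p) :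
    M.cof i ∧ M.weq i := by
  obtain ⟨Z, j, q, hj, hwj, hq, hfac⟩ := M.factor_triv_cof_fib i
  haveI := h q hq
  have sq : CommSq j i q (𝟙 B) := ⟨by simp [hfac]⟩
  exact ⟨M.cof_retract i j (𝟙 A) (𝟙 A) sq.lift q (by simp) sq.fac_right
      (by simp [sq.fac_left]) (by simp [hfac]) hj,
    M.weq_retract i j (𝟙 A) (𝟙 A) sq.lift q (by simp) sq.fac_right
      (by simp [sq.fac_left]) (by simp [hfac]) hwj⟩

lemma fib_of_rlp {X Y : C} {p : X ⟶ Y}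
    (h : ∀ {A B : C} (i : A ⟶ B), M.cof i → M.weq i → HasLiftingProperty i p) :
    M.fib p := by
  obtain ⟨Z, j, q, hj, hwj, hq, hfac⟩ := M.factor_triv_cof_fib p
  haveI := h j hj hwj
  have sq : CommSq (𝟙 X) j p q := ⟨by simp [hfac]⟩
  exact M.fib_retract p q j sq.lift (𝟙 Y) (𝟙 Y) sq.fac_left (by simp)
    (by simp [hfac]) (by simp [sq.fac_right]) hq

lemma triv_fib_of_rlp {X Y : C} {p : X ⟶ Y}
    (h : ∀ {A B : C} (i : A ⟶ B), M.cof i → HasLiftingProperty i p) :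
    M.fib p ∧ M.weq p := by
  obtain ⟨Z, c, q, hc, hq, hwq, hfac⟩ := M.factor_cof_triv_fib p
  haveI := h c hc
  have sq : CommSq (𝟙 X) c p q := ⟨by simp [hfac]⟩
  exact ⟨M.fib_retract p q c sq.lift (𝟙 Y) (𝟙 Y) sq.fac_left (by simp)
      (by simp [hfac]) (by simp [sq.fac_right]) hq,
    M.weq_retract p q c sq.lift (𝟙 Y) (𝟙 Y) sq.fac_left (by simp)
      (by simp [hfac]) (by simp [sq.fac_right]) hwq⟩

/-! ### Transfer of lifting properties -/

lemma hlp_pushout_inl {A B B' X Y : C} (i : A ⟶ B) (t : A ⟶ B') (p : X ⟶ Y)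
    [HasLiftingProperty t p] : HasLiftingProperty (pushout.inl i t) p := by
  constructor
  intro u v sq
  have sq' : CommSq (i ≫ u) t p (pushout.inr i t ≫ v) := ⟨by
    rw [Category.assoc, sq.w, ← Category.assoc, pushout.condition, Category.assoc]⟩
  exact CommSq.HasLift.mk' ⟨pushout.desc u sq'.lift sq'.fac_left.symm,
    by simp,
    pushout.hom_ext (by simpa using sq.w) (by simpa using sq'.fac_right)⟩

lemma hlp_pushout_inr {A B B' X Y : C} (i : A ⟶ B) (t : A ⟶ B') (p : X ⟶ Y)
    [HasLiftingProperty i p] : HasLiftingProperty (pushout.inr i t) p := by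
  constructor
  intro u v sq
  have sq' : CommSq (t ≫ u) i p (pushout.inl i t ≫ v) := ⟨by
    rw [Category.assoc, sq.w, ← Category.assoc, ← pushout.condition, Category.assoc]⟩
  exact CommSq.HasLift.mk' ⟨pushout.desc sq'.lift u sq'.fac_left,
    by simp,
    pushout.hom_ext (by simpa using sq'.fac_right) (by simpa using sq.w)⟩

lemma hlp_pullback_fst {Y X Z A B : C} (f : Y ⟶ X) (q : Z ⟶ X) (i : A ⟶ B)
    [HasLiftingProperty i q] : HasLiftingProperty i (pullback.fst f q) := by
  constructor
  intro u v sq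
  have sq' : CommSq (u ≫ pullback.snd f q) i q (v ≫ f) := ⟨by
    rw [Category.assoc, ← pullback.condition, ← Category.assoc, sq.w, Category.assoc]⟩
  exact CommSq.HasLift.mk' ⟨pullback.lift v sq'.lift sq'.fac_right.symm,
    pullback.hom_ext (by simpa using sq.w.symm) (by simpa using sq'.fac_left),
    by simp⟩

lemma hlp_coprod_inl {X X' E D : C} (p : E ⟶ D)
    [HasLiftingProperty (initial.to X') p] :
    HasLiftingProperty (coprod.inl : X ⟶ X ⨿ X') p := by
  constructor
  intro u v sq
  have sq' : CommSq (initial.to E) (initial.to X') p (coprod.inr ≫ v) :=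
    ⟨initial.hom_ext _ _⟩
  exact CommSq.HasLift.mk' ⟨coprod.desc u sq'.lift,
    by simp,
    coprod.hom_ext (by simpa using sq.w) (by simpa using sq'.fac_right)⟩

lemma hlp_coprod_inr {X X' E D : C} (p : E ⟶ D)
    [HasLiftingProperty (initial.to X) p] :
    HasLiftingProperty (coprod.inr : X' ⟶ X ⨿ X') p := by
  constructor
  intro u v sq
  have sq' : CommSq (initial.to E) (initial.to X) p (coprod.inl ≫ v) :=
    ⟨initial.hom_ext _ _⟩
  exact CommSq.HasLift.mk' ⟨coprod.desc sq'.lift u,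
    by simp,
    coprod.hom_ext (by simpa using sq'.fac_right) (by simpa using sq.w)⟩

/-! ### Derived closure properties -/

lemma cof_comp {A B D : C} {i : A ⟶ B} {i' : B ⟶ D} (hi : M.cof i) (hi' : M.cof i') :
    M.cof (i ≫ i') :=
  M.cof_of_llp fun p hp hwp => by
    haveI := M.lift_of_weq_fib i p hi hp hwp
    haveI := M.lift_of_weq_fib i' p hi' hp hwp
    infer_instance

lemma fib_comp {X Y Z : C} {p : X ⟶ Y} {p' : Y ⟶ Z} (hp : M.fib p) (hp' : M.fib p') :
    M.fib (p ≫ p') :=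
  M.fib_of_rlp fun i hi hwi => by
    haveI := M.lift_of_weq_cof i p hi hwi hp
    haveI := M.lift_of_weq_cof i p' hi hwi hp'
    infer_instance

lemma fibrant_of_fib {Z X : C} {q : Z ⟶ X} (hq : M.fib q) (hX : M.Fibrant X) :
    M.Fibrant Z := by
  show M.fib (terminal.from Z)
  rw [show terminal.from Z = q ≫ terminal.from X from terminal.hom_ext _ _]
  exact M.fib_comp hq hX

lemma cof_pushout_inr {A B B' : C} (i : A ⟶ B) (t : A ⟶ B') (hi : M.cof i) :
    M.cof (pushout.inr i t) :=
  M.cof_of_llp fun p hp hwp => by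
    haveI := M.lift_of_weq_fib i p hi hp hwp
    exact hlp_pushout_inr i t p

lemma triv_cof_pushout_inl {A B B' : C} (i : A ⟶ B) (t : A ⟶ B')
    (ht : M.cof t) (hwt : M.weq t) : M.cof (pushout.inl i t) ∧ M.weq (pushout.inl i t) :=
  M.triv_cof_of_llp fun p hp => by
    haveI := M.lift_of_weq_cof t p ht hwt hp
    exact hlp_pushout_inl i t p

lemma triv_fib_pullback_fst {Y X Z : C} (f : Y ⟶ X) (q : Z ⟶ X)
    (hq : M.fib q) (hwq : M.weq q) :
    M.fib (pullback.fst f q) ∧ M.weq (pullback.fst f q) :=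
  M.triv_fib_of_rlp fun i hi => by
    haveI := M.lift_of_weq_fib i q hi hq hwq
    exact hlp_pullback_fst f q i

lemma cof_coprod_inl {X X' : C} (hX' : M.Cofibrant X') :
    M.cof (coprod.inl : X ⟶ X ⨿ X') :=
  M.cof_of_llp fun p hp hwp => by
    haveI := M.lift_of_weq_fib (initial.to X') p hX' hp hwp
    exact hlp_coprod_inl p

lemma cof_coprod_inr {X X' : C} (hX : M.Cofibrant X) :
    M.cof (coprod.inr : X' ⟶ X ⨿ X') :=
  M.cof_of_llp fun p hp hwp => by
    haveI := M.lift_of_weq_fib (initial.to X) p hX hp hwp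
    exact hlp_coprod_inr p

/-! ### Basic facts on cylinder homotopies -/

lemma cylinder_nonempty (X : C) : Nonempty (M.Cylinder X) := by
  obtain ⟨Z, i, p, hc, hf, hw, hfac⟩ := M.factor_cof_triv_fib (coprod.desc (𝟙 X) (𝟙 X))
  exact ⟨⟨Z, i, p, hc, hw, hfac⟩⟩

lemma hpc_refl {X Y : C} (f : X ⟶ Y) : M.CylinderHomotopic f f := by
  obtain ⟨cyl⟩ := M.cylinder_nonempty X
  have key : cyl.ins ≫ cyl.p ≫ f = coprod.desc (𝟙 X) (𝟙 X) ≫ f := by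
    rw [← Category.assoc, cyl.ins_p]
  exact ⟨cyl, cyl.p ≫ f, by rw [key]; simp, by rw [key]; simp⟩

lemma hpc_symm {X Y : C} {f g : X ⟶ Y} (h : M.CylinderHomotopic f g) :
    M.CylinderHomotopic g f := by
  obtain ⟨cyl, H, h0, h1⟩ := h
  let σ : X ⨿ X ⟶ X ⨿ X := coprod.desc coprod.inr coprod.inl
  haveI : IsIso σ := ⟨coprod.desc coprod.inr coprod.inl,
    coprod.hom_ext (by simp [σ]) (by simp [σ]), coprod.hom_ext (by simp [σ]) (by simp [σ])⟩
  have hcof : M.cof (σ ≫ cyl.ins) := M.cof_of_llp fun p hp hwp => by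
    haveI := M.lift_of_weq_fib cyl.ins p cyl.cof_ins hp hwp
    infer_instance
  refine ⟨⟨cyl.Z, σ ≫ cyl.ins, cyl.p, hcof, cyl.weq_p, ?_⟩, H, ?_, ?_⟩
  · rw [Category.assoc, cyl.ins_p]
    exact coprod.hom_ext (by simp [σ]) (by simp [σ])
  · show coprod.inl ≫ (σ ≫ cyl.ins) ≫ H = g
    rw [← Category.assoc, ← Category.assoc, show (coprod.inl ≫ σ : X ⟶ X ⨿ X) = coprod.inr by simp [σ],
      Category.assoc]
    exact h1
  · show coprod.inr ≫ (σ ≫ cyl.ins) ≫ H = f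
    rw [← Category.assoc, ← Category.assoc, show (coprod.inr ≫ σ : X ⟶ X ⨿ X) = coprod.inl by simp [σ],
      Category.assoc]
    exact h0

lemma hpc_postcomp {X Y Z : C} (k : Y ⟶ Z) {f g : X ⟶ Y}
    (h : M.CylinderHomotopic f g) : M.CylinderHomotopic (f ≫ k) (g ≫ k) := by
  obtain ⟨cyl, H, h0, h1⟩ := h
  exact ⟨cyl, H ≫ k, by rw [← h0]; simp, by rw [← h1]; simp⟩

/-- The key consequence of left properness: precomposition with a weak equivalence
reflects cylinder homotopy. -/
lemma hpc_of_precomp_weq (hproper : M.LeftProper)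
    (hcoprod : ∀ ⦃X' X : C⦄ (w : X' ⟶ X), M.weq w → M.weq (coprod.map w w))
    {X' X Y : C} {r : X' ⟶ X} (hr : M.weq r) {f g : X ⟶ Y}
    (h : M.CylinderHomotopic (r ≫ f) (r ≫ g)) : M.CylinderHomotopic f g := by
  obtain ⟨cyl, H, h0, h1⟩ := h
  set t : X' ⨿ X' ⟶ X ⨿ X := coprod.map r r with ht_def
  let P := pushout cyl.ins t
  let k : cyl.Z ⟶ P := pushout.inl cyl.ins t
  let insP : (X ⨿ X) ⟶ P := pushout.inr cyl.ins t
  have hk : M.weq k :=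
    hproper t cyl.ins insP k (IsPushout.of_hasPushout cyl.ins t).flip cyl.cof_ins
      (hcoprod r hr)
  have hw1 : cyl.ins ≫ cyl.p ≫ r = t ≫ coprod.desc (𝟙 X) (𝟙 X) := by
    rw [← Category.assoc, cyl.ins_p]
    exact coprod.hom_ext (by simp [ht_def]) (by simp [ht_def])
  have hw2 : cyl.ins ≫ H = t ≫ coprod.desc f g := by
    refine coprod.hom_ext ?_ ?_
    · rw [← Category.assoc, ← Category.assoc]
      simpa [ht_def] using h0
    · rw [← Category.assoc, ← Category.assoc]
      simpa [ht_def] using h1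
  let pP : P ⟶ X := pushout.desc (cyl.p ≫ r) (coprod.desc (𝟙 X) (𝟙 X)) hw1
  have hwp : M.weq pP := by
    refine M.weq_of_comp_left k pP hk ?_
    have : k ≫ pP = cyl.p ≫ r := pushout.inl_desc _ _ _
    rw [this]
    exact M.weq_comp _ _ cyl.weq_p hr
  have hcofP : M.cof insP := M.cof_pushout_inr cyl.ins t cyl.cof_ins
  refine ⟨⟨P, insP, pP, hcofP, hwp, pushout.inr_desc _ _ _⟩,
    pushout.desc H (coprod.desc f g) hw2, ?_, ?_⟩
  · show coprod.inl ≫ insP ≫ pushout.desc H (coprod.desc f g) hw2 = f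
    rw [show insP ≫ pushout.desc H (coprod.desc f g) hw2 = coprod.desc f g from
      pushout.inr_desc _ _ _]
    simp
  · show coprod.inr ≫ insP ≫ pushout.desc H (coprod.desc f g) hw2 = g
    rw [show insP ≫ pushout.desc H (coprod.desc f g) hw2 = coprod.desc f g from
      pushout.inr_desc _ _ _]
    simp

/-- For a fibrant target, any cylinder homotopy can be realized on a "good" cylinder,
whose projection to `X` is a fibration. -/
lemma hpc_good {X Y : C} (hY : M.Fibrant Y) {f g : X ⟶ Y} (h : M.CylinderHomotopic f g) :
    ∃ (Z : C) (ins : (X ⨿ X) ⟶ Z) (q : Z ⟶ X) (H : Z ⟶ Y),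
      M.cof ins ∧ M.fib q ∧ M.weq q ∧ ins ≫ q = coprod.desc (𝟙 X) (𝟙 X) ∧
      coprod.inl ≫ ins ≫ H = f ∧ coprod.inr ≫ ins ≫ H = g := by
  obtain ⟨cyl, H, h0, h1⟩ := h
  obtain ⟨Z₁, j, q, hj, hwj, hq, hfac⟩ := M.factor_triv_cof_fib cyl.p
  haveI := M.lift_of_weq_cof j (terminal.from Y) hj hwj hY
  have sq : CommSq H j (terminal.from Y) (terminal.from Z₁) := ⟨terminal.hom_ext _ _⟩
  refine ⟨Z₁, cyl.ins ≫ j, q, sq.lift, M.cof_comp cyl.cof_ins hj, hq,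
    M.weq_of_comp_left j q hwj (by rw [hfac]; exact cyl.weq_p),
    by rw [Category.assoc, hfac, cyl.ins_p], ?_, ?_⟩
  · simp only [Category.assoc, sq.fac_left]
    exact h0
  · simp only [Category.assoc, sq.fac_left]
    exact h1

/-- For a fibrant target, cylinder homotopy is stable under precomposition. -/
lemma hpc_precomp {A X Y : C} (hY : M.Fibrant Y) (e : A ⟶ X) {f g : X ⟶ Y}
    (h : M.CylinderHomotopic f g) : M.CylinderHomotopic (e ≫ f) (e ≫ g) := by
  obtain ⟨Z₁, ins₁, q, H₁, hins₁, hq, hwq, hfac₁, h0, h1⟩ := M.hpc_good hY h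
  obtain ⟨cylA⟩ := M.cylinder_nonempty A
  haveI := M.lift_of_weq_fib cylA.ins q cylA.cof_ins hq hwq
  have sq : CommSq (coprod.map e e ≫ ins₁) cylA.ins q (cylA.p ≫ e) := ⟨by
    rw [Category.assoc, hfac₁, ← Category.assoc, cylA.ins_p]
    exact coprod.hom_ext (by simp) (by simp)⟩
  refine ⟨cylA, sq.lift ≫ H₁, ?_, ?_⟩
  · rw [show cylA.ins ≫ sq.lift ≫ H₁ = (cylA.ins ≫ sq.lift) ≫ H₁ by simp, sq.fac_left]
    rw [show coprod.inl ≫ (coprod.map e e ≫ ins₁) ≫ H₁ =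
      e ≫ coprod.inl ≫ ins₁ ≫ H₁ by simp, h0]
  · rw [show cylA.ins ≫ sq.lift ≫ H₁ = (cylA.ins ≫ sq.lift) ≫ H₁ by simp, sq.fac_left]
    rw [show coprod.inr ≫ (coprod.map e e ≫ ins₁) ≫ H₁ =
      e ≫ coprod.inr ≫ ins₁ ≫ H₁ by simp, h1]

/-- Postcomposition with a trivial fibration reflects cylinder homotopy. -/
lemma hpc_cancel_triv_fib {A E Y : C} {q : E ⟶ Y} (hq : M.fib q) (hwq : M.weq q)
    {a b : A ⟶ E} (h : M.CylinderHomotopic (a ≫ q) (b ≫ q)) :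
    M.CylinderHomotopic a b := by
  obtain ⟨cyl, H, h0, h1⟩ := h
  haveI := M.lift_of_weq_fib cyl.ins q cyl.cof_ins hq hwq
  have sq : CommSq (coprod.desc a b) cyl.ins q H := ⟨by
    refine coprod.hom_ext ?_ ?_
    · rw [← Category.assoc]; simpa using h0.symm
    · rw [← Category.assoc]; simpa using h1.symm⟩
  exact ⟨cyl, sq.lift, by rw [sq.fac_left]; simp, by rw [sq.fac_left]; simp⟩

lemma exists_retraction {A B : C} {j : A ⟶ B} (hj : M.cof j) (hwj : M.weq j)
    (hA : M.Fibrant A) : ∃ ρ : B ⟶ A, j ≫ ρ = 𝟙 A := by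
  haveI := M.lift_of_weq_cof j (terminal.from A) hj hwj hA
  have sq : CommSq (𝟙 A) j (terminal.from A) (terminal.from B) := ⟨terminal.hom_ext _ _⟩
  exact ⟨sq.lift, sq.fac_left⟩

/-- Postcomposition with a weak equivalence out of a fibrant object reflects
cylinder homotopy. -/
lemma hpc_cancel_postcomp_weq {A Y Y'' : C} (hY : M.Fibrant Y) {u : Y ⟶ Y''}
    (hu : M.weq u) {a b : A ⟶ Y} (h : M.CylinderHomotopic (a ≫ u) (b ≫ u)) :
    M.CylinderHomotopic a b := by
  obtain ⟨Z₁, j, q, hj, hwj, hq, hfac⟩ := M.factor_triv_cof_fib u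
  have hwq : M.weq q := M.weq_of_comp_left j q hwj (by rw [hfac]; exact hu)
  have h' : M.CylinderHomotopic ((a ≫ j) ≫ q) ((b ≫ j) ≫ q) := by
    simpa [hfac] using h
  have h2 := M.hpc_cancel_triv_fib hq hwq h'
  obtain ⟨ρ, hρ⟩ := M.exists_retraction hj hwj hY
  have h3 := M.hpc_postcomp ρ h2
  simpa [hρ] using h3

/-- Transitivity of cylinder homotopy for maps out of a cofibrant object. -/
lemma hpc_trans_cofib {X₀ Y : C} (hX₀ : M.Cofibrant X₀) {f g h : X₀ ⟶ Y}
    (h1 : M.CylinderHomotopic f g) (h2 : M.CylinderHomotopic g h) :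
    M.CylinderHomotopic f h := by
  obtain ⟨c1, H1, e10, e11⟩ := h1
  obtain ⟨c2, H2, e20, e21⟩ := h2
  have hi₀ : M.cof (coprod.inl ≫ c1.ins) := M.cof_comp (M.cof_coprod_inl hX₀) c1.cof_ins
  have hi₀' : M.cof (coprod.inl ≫ c2.ins) := M.cof_comp (M.cof_coprod_inl hX₀) c2.cof_ins
  have hi₁p : (coprod.inr ≫ c1.ins) ≫ c1.p = 𝟙 X₀ := by
    rw [Category.assoc, c1.ins_p]; simp
  have hi₀p : (coprod.inl ≫ c1.ins) ≫ c1.p = 𝟙 X₀ := by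
    rw [Category.assoc, c1.ins_p]; simp
  have hi₀'p : (coprod.inl ≫ c2.ins) ≫ c2.p = 𝟙 X₀ := by
    rw [Category.assoc, c2.ins_p]; simp
  have hi₁'p : (coprod.inr ≫ c2.ins) ≫ c2.p = 𝟙 X₀ := by
    rw [Category.assoc, c2.ins_p]; simp
  have hwi₀' : M.weq (coprod.inl ≫ c2.ins) :=
    M.weq_of_comp_right _ c2.p c2.weq_p (by rw [hi₀'p]; exact M.weq_id X₀)
  have hwkZ : M.weq (pushout.inl (coprod.inr ≫ c1.ins) (coprod.inl ≫ c2.ins)) :=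
    (M.triv_cof_pushout_inl _ _ hi₀' hwi₀').2
  have hglueH : (coprod.inr ≫ c1.ins) ≫ H1 = (coprod.inl ≫ c2.ins) ≫ H2 := by
    rw [Category.assoc, Category.assoc, e11, e20]
  have hgluep : (coprod.inr ≫ c1.ins) ≫ c1.p = (coprod.inl ≫ c2.ins) ≫ c2.p := by
    rw [hi₁p, hi₀'p]
  refine ⟨⟨pushout (coprod.inr ≫ c1.ins) (coprod.inl ≫ c2.ins),
      coprod.desc ((coprod.inl ≫ c1.ins) ≫ pushout.inl _ _)
        ((coprod.inr ≫ c2.ins) ≫ pushout.inr _ _),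
      pushout.desc c1.p c2.p hgluep, ?_, ?_, ?_⟩,
    pushout.desc H1 H2 hglueH, ?_, ?_⟩
  · -- the inclusion is a cofibration
    refine M.cof_of_llp fun p hp hwp => ?_
    constructor
    intro u v sq
    haveI := M.lift_of_weq_fib _ p hi₀ hp hwp
    have sqZ : CommSq (coprod.inl ≫ u) (coprod.inl ≫ c1.ins) p
        (pushout.inl (coprod.inr ≫ c1.ins) (coprod.inl ≫ c2.ins) ≫ v) := ⟨by
      simp only [Category.assoc]
      rw [sq.w]
      simp only [coprod.inl_desc_assoc, Category.assoc]⟩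
    obtain ⟨ℓ, hl1, hl2⟩ : ∃ l, (coprod.inl ≫ c1.ins) ≫ l = coprod.inl ≫ u ∧
        l ≫ p = pushout.inl (coprod.inr ≫ c1.ins) (coprod.inl ≫ c2.ins) ≫ v :=
      ⟨sqZ.lift, sqZ.fac_left, sqZ.fac_right⟩
    haveI := M.lift_of_weq_fib c2.ins p c2.cof_ins hp hwp
    have sqZ' : CommSq (coprod.desc ((coprod.inr ≫ c1.ins) ≫ ℓ) (coprod.inr ≫ u))
        c2.ins p (pushout.inr (coprod.inr ≫ c1.ins) (coprod.inl ≫ c2.ins) ≫ v) := ⟨by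
      refine coprod.hom_ext ?_ ?_
      · have pc : coprod.inr ≫ c1.ins ≫
            pushout.inl (coprod.inr ≫ c1.ins) (coprod.inl ≫ c2.ins) ≫ v =
            coprod.inl ≫ c2.ins ≫
            pushout.inr (coprod.inr ≫ c1.ins) (coprod.inl ≫ c2.ins) ≫ v := by
          simpa only [Category.assoc] using congrArg (· ≫ v) pushout.condition
        simp only [coprod.inl_desc_assoc, Category.assoc]
        rw [hl2, pc]
      · simp only [coprod.inr_desc_assoc, Category.assoc]
        rw [sq.w]
        simp only [coprod.inr_desc_assoc, Category.assoc]⟩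
    obtain ⟨ℓ', hl'1, hl'2⟩ : ∃ l, c2.ins ≫ l =
          coprod.desc ((coprod.inr ≫ c1.ins) ≫ ℓ) (coprod.inr ≫ u) ∧
        l ≫ p = pushout.inr (coprod.inr ≫ c1.ins) (coprod.inl ≫ c2.ins) ≫ v :=
      ⟨sqZ'.lift, sqZ'.fac_left, sqZ'.fac_right⟩
    have hglue : (coprod.inr ≫ c1.ins) ≫ ℓ = (coprod.inl ≫ c2.ins) ≫ ℓ' := by
      rw [Category.assoc coprod.inl c2.ins ℓ', hl'1, coprod.inl_desc]
    refine CommSq.HasLift.mk' ⟨pushout.desc ℓ ℓ' hglue, ?_, ?_⟩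
    · refine coprod.hom_ext ?_ ?_
      · have fl := hl1
        simp only [Category.assoc] at fl
        simp only [coprod.inl_desc_assoc, Category.assoc, pushout.inl_desc]
        exact fl
      · simp only [coprod.inr_desc_assoc, Category.assoc, pushout.inr_desc]
        rw [hl'1, coprod.inr_desc]
    · refine pushout.hom_ext ?_ ?_
      · rw [← Category.assoc, pushout.inl_desc, hl2]
      · rw [← Category.assoc, pushout.inr_desc, hl'2]
  · -- the projection is a weak equivalence
    refine M.weq_of_comp_left _ _ hwkZ ?_
    rw [pushout.inl_desc]
    exact c1.weq_p
  · -- compatibility with the fold map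
    refine coprod.hom_ext ?_ ?_
    · simp only [coprod.inl_desc_assoc, Category.assoc, pushout.inl_desc]
      rw [c1.ins_p]
    · simp only [coprod.inr_desc_assoc, Category.assoc, pushout.inr_desc]
      rw [c2.ins_p]
  · -- first boundary
    simp only [coprod.inl_desc_assoc, Category.assoc, pushout.inl_desc]
    exact e10
  · -- second boundary
    simp only [coprod.inr_desc_assoc, Category.assoc, pushout.inr_desc]
    exact e21

/-- Transitivity of cylinder homotopy for a fibrant target, using left properness. -/
lemma hpc_trans (hproper : M.LeftProper)
    (hcoprod : ∀ ⦃X' X : C⦄ (w : X' ⟶ X), M.weq w → M.weq (coprod.map w w))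
    {X Y : C} (hY : M.Fibrant Y) {f g h : X ⟶ Y}
    (h1 : M.CylinderHomotopic f g) (h2 : M.CylinderHomotopic g h) :
    M.CylinderHomotopic f h := by
  obtain ⟨X₀, c, w, hc, hfw, hww, hfac⟩ := M.factor_cof_triv_fib (initial.to X)
  have hX₀ : M.Cofibrant X₀ := by
    show M.cof (initial.to X₀)
    rw [show initial.to X₀ = c from initial.hom_ext _ _]
    exact hc
  exact M.hpc_of_precomp_weq hproper hcoprod hww
    (M.hpc_trans_cofib hX₀ (M.hpc_precomp hY w h1) (M.hpc_precomp hY w h2))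

lemma congruence_cylRel (hproper : M.LeftProper)
    (hcoprod : ∀ ⦃X' X : C⦄ (w : X' ⟶ X), M.weq w → M.weq (coprod.map w w)) :
    Congruence M.cylRel where
  equivalence := by
    intro X Y
    exact ⟨fun f => M.hpc_refl f.hom, fun hfg => M.hpc_symm hfg,
      fun hfg hgh => M.hpc_trans hproper hcoprod Y.property hfg hgh⟩
  comp_left := fun {X Y Z} e {g g'} hg => M.hpc_precomp Z.property e.hom hg
  comp_right := fun {X Y Z} {f f'} k hf => M.hpc_postcomp k.hom hf

/-- The Ore condition (up to cylinder homotopy) for weak equivalences between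
fibrant objects. -/
lemma ore (hproper : M.LeftProper)
    (hcoprod : ∀ ⦃X' X : C⦄ (w : X' ⟶ X), M.weq w → M.weq (coprod.map w w))
    {X' X Y : C} (hX' : M.Fibrant X') (hX : M.Fibrant X) (hY : M.Fibrant Y)
    {t : X' ⟶ X} (ht : M.weq t) (f : Y ⟶ X) :
    ∃ (P : C) (_ : M.Fibrant P) (t' : P ⟶ Y) (_ : M.weq t') (g : P ⟶ X'),
      M.CylinderHomotopic (g ≫ t) (t' ≫ f) := by
  obtain ⟨X₁, j, q, hj, hwj, hq, hfac⟩ := M.factor_triv_cof_fib t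
  have hwq : M.weq q := M.weq_of_comp_left j q hwj (by rw [hfac]; exact ht)
  have hX₁ : M.Fibrant X₁ := M.fibrant_of_fib hq hX
  have htf := M.triv_fib_pullback_fst f q hq hwq
  have hPfib : M.Fibrant (pullback f q) := M.fibrant_of_fib htf.1 hY
  obtain ⟨ρ, hρ⟩ := M.exists_retraction hj hwj hX'
  have hρj : M.CylinderHomotopic (ρ ≫ j) (𝟙 X₁) := by
    apply M.hpc_of_precomp_weq hproper hcoprod hwj
    rw [show j ≫ ρ ≫ j = j ≫ 𝟙 X₁ by rw [← Category.assoc, hρ]; simp]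
    exact M.hpc_refl _
  refine ⟨pullback f q, hPfib, pullback.fst f q, htf.2, pullback.snd f q ≫ ρ, ?_⟩
  have step := M.hpc_postcomp q (M.hpc_precomp hX₁ (pullback.snd f q) hρj)
  simpa [← hfac, pullback.condition] using step

end ModelStructure

open ModelStructure in
/-- If `M` is left proper and `w ⊔ w` is a weak equivalence for every weak equivalence `w`,
then cylinder homotopy is a congruence on the full subcategory of fibrant objects and the
canonical functor from the quotient category to the localization at weak equivalences
(the homotopy category of fibrant objects) is faithful. -/
theorem faithful_quotient_to_homotopyCategory_of_fibrant
    {C : Type u} [Category.{v} C] [HasFiniteLimits C] [HasFiniteColimits C]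
    (M : ModelStructure C) (hproper : M.LeftProper)
    (hcoprod : ∀ ⦃X' X : C⦄ (w : X' ⟶ X), M.weq w → M.weq (coprod.map w w)) :
    Congruence M.cylRel ∧
    ∃ (h : ∀ (X Y : ObjectProperty.FullSubcategory M.Fibrant) (f g : X ⟶ Y),
        M.cylRel f g → M.weqFib.Q.map f = M.weqFib.Q.map g),
      (CategoryTheory.Quotient.lift M.cylRel M.weqFib.Q h).Faithful := by
  have hcongr : Congruence M.cylRel := M.congruence_cylRel hproper hcoprod
  haveI : Congruence M.cylRel := hcongr
  have hQ : ∀ (X Y : ObjectProperty.FullSubcategory M.Fibrant) (f g : X ⟶ Y),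
      M.cylRel f g → M.weqFib.Q.map f = M.weqFib.Q.map g := by
    intro X Y f g hfg
    obtain ⟨Z, ins, q, H, hins, hq, hwq, hfac, h0, h1⟩ := M.hpc_good Y.property hfg
    have hZ : M.Fibrant Z := M.fibrant_of_fib hq X.property
    let Zo : ObjectProperty.FullSubcategory M.Fibrant := ⟨Z, hZ⟩
    let j₀ : X ⟶ Zo := ObjectProperty.homMk (coprod.inl ≫ ins : X.obj ⟶ Z)
    let j₁ : X ⟶ Zo := ObjectProperty.homMk (coprod.inr ≫ ins : X.obj ⟶ Z)
    let qq : Zo ⟶ X := ObjectProperty.homMk q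
    have hj₀ : j₀ ≫ qq = 𝟙 X := by
      apply ObjectProperty.hom_ext
      show (coprod.inl ≫ ins) ≫ q = 𝟙 X.obj
      rw [Category.assoc, hfac]; simp [coprod.inl_desc]
    have hj₁ : j₁ ≫ qq = 𝟙 X := by
      apply ObjectProperty.hom_ext
      show (coprod.inr ≫ ins) ≫ q = 𝟙 X.obj
      rw [Category.assoc, hfac]; simp [coprod.inr_desc]
    haveI : IsIso (M.weqFib.Q.map qq) := Localization.inverts M.weqFib.Q M.weqFib qq hwq
    have hj : M.weqFib.Q.map j₀ = M.weqFib.Q.map j₁ := by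
      rw [← cancel_mono (M.weqFib.Q.map qq), ← Functor.map_comp, ← Functor.map_comp,
        hj₀, hj₁]
    have ef : f = j₀ ≫ (ObjectProperty.homMk H : Zo ⟶ Y) := by
      apply ObjectProperty.hom_ext
      show f.hom = (coprod.inl ≫ ins) ≫ H
      rw [Category.assoc, h0]
    have eg : g = j₁ ≫ (ObjectProperty.homMk H : Zo ⟶ Y) := by
      apply ObjectProperty.hom_ext
      show g.hom = (coprod.inr ≫ ins) ≫ H
      rw [Category.assoc, h1]
    rw [ef, eg, Functor.map_comp, Functor.map_comp, hj]
  let π := Quotient.functor M.cylRel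
  let S : MorphismProperty (CategoryTheory.Quotient M.cylRel) :=
    fun A B φ => ∃ t : A.as ⟶ B.as, M.weq t.hom ∧ π.map t = φ
  haveI hSmul : S.IsMultiplicative :=
    { id_mem := fun A => ⟨𝟙 A.as, M.weq_id _, π.map_id A.as⟩
      comp_mem := fun φ ψ hφ hψ => by
        obtain ⟨t, ht, rfl⟩ := hφ
        obtain ⟨t', ht', rfl⟩ := hψ
        exact ⟨t ≫ t', M.weq_comp t.hom t'.hom ht ht', π.map_comp t t'⟩ }
  haveI hSfrac : S.HasRightCalculusOfFractions := by
    constructor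
    · -- the Ore condition
      intro A B φ
      obtain ⟨t, ht, hts⟩ := φ.hs
      obtain ⟨f₀, hf₀⟩ := π.map_surjective φ.f
      obtain ⟨P, hP, t', hwt', gg, hg⟩ :=
        M.ore hproper hcoprod B.as.property φ.Y'.as.property A.as.property ht f₀.hom
      let Po : ObjectProperty.FullSubcategory M.Fibrant := ⟨P, hP⟩
      let t'' : Po ⟶ A.as := ObjectProperty.homMk t'
      let gg'' : Po ⟶ B.as := ObjectProperty.homMk gg
      refine ⟨⟨π.map t'', ⟨t'', hwt', rfl⟩, π.map gg''⟩, ?_⟩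
      show π.map t'' ≫ φ.f = π.map gg'' ≫ φ.s
      rw [← hf₀, ← hts, ← Functor.map_comp, ← Functor.map_comp]
      exact CategoryTheory.Quotient.sound M.cylRel (M.hpc_symm hg)
    · -- cancellation
      intro A B B' f₁ f₂ s hs hcomp
      obtain ⟨u, hu, rfl⟩ := hs
      obtain ⟨a, ha⟩ := π.map_surjective f₁
      obtain ⟨b, hb⟩ := π.map_surjective f₂
      refine ⟨A, 𝟙 A, ⟨𝟙 A.as, M.weq_id _, π.map_id _⟩, ?_⟩
      rw [Category.id_comp, Category.id_comp, ← ha, ← hb]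
      rw [← ha, ← hb, ← Functor.map_comp, ← Functor.map_comp] at hcomp
      have hrel := (Quotient.functor_map_eq_iff M.cylRel _ _).1 hcomp
      exact CategoryTheory.Quotient.sound M.cylRel (M.hpc_cancel_postcomp_weq B.as.property hu hrel)
  have hFinv : M.weqFib.IsInvertedBy (π ⋙ S.Q) := by
    intro A B t ht
    have : IsIso (S.Q.map (π.map t)) :=
      Localization.inverts S.Q S (π.map t) ⟨t, ht, rfl⟩
    exact this
  have hfac := Localization.Construction.fac (π ⋙ S.Q) hFinv
  refine ⟨hcongr, hQ, ?_⟩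
  constructor
  intro A B a b hab
  obtain ⟨f, rfl⟩ := π.map_surjective a
  obtain ⟨g, rfl⟩ := π.map_surjective b
  rw [Quotient.lift_map_functor_map, Quotient.lift_map_functor_map] at hab
  have h2 : S.Q.map (π.map f) = S.Q.map (π.map g) := by
    have e1 := Functor.congr_hom hfac f
    have e2 := Functor.congr_hom hfac g
    have e3 : (M.weqFib.Q ⋙ Localization.Construction.lift (π ⋙ S.Q) hFinv).map f =
        (M.weqFib.Q ⋙ Localization.Construction.lift (π ⋙ S.Q) hFinv).map g := by
      show (Localization.Construction.lift (π ⋙ S.Q) hFinv).map (M.weqFib.Q.map f) =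
        (Localization.Construction.lift (π ⋙ S.Q) hFinv).map (M.weqFib.Q.map g)
      rw [hab]
    have hmain := e1.symm.trans (e3.trans e2)
    exact (cancel_mono (eqToHom _)).1 ((cancel_epi (eqToHom _)).1 hmain)
  obtain ⟨A', s, hs, hcomp⟩ :=
    (MorphismProperty.map_eq_iff_precomp S.Q S (π.map f) (π.map g)).1 h2
  obtain ⟨t, hwt, rfl⟩ := hs
  rw [← Functor.map_comp, ← Functor.map_comp] at hcomp
  have hrel := (Quotient.functor_map_eq_iff M.cylRel _ _).1 hcomp
  exact CategoryTheory.Quotient.sound M.cylRel (M.hpc_of_precomp_weq hproper hcoprod hwt hrel)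
end

section
/- Let M be a left proper model category in which w ⊔ w is a weak equivalence for every weak equivalence w. Let w : X' → X be a weak equivalence, let (Z', ins', p') be a cylinder for X', and let the square with top edge w ⊔ w : X' ⊔ X' → X ⊔ X, left edge ins' : X' ⊔ X' → Z', right edge i : X ⊔ X → Z and bottom edge w' : Z' → Z be a pushout. Then w' is a weak equivalence, and there is a unique morphism s : Z → X with i ≫ s equal to the fold map (1,1) : X ⊔ X → X and w' ≫ s = p' ≫ w; moreover s is a weak equivalence, so that (Z, i, s) is a cylinder for X. -/
open CategoryTheory CategoryTheory.Limits

universe v u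

open ModelStructure in
/-- Pushing out a cylinder for `X'` along a weak equivalence `w : X' ⟶ X` (more precisely,
pushing out `w ⊔ w` along the cofibration `ins'`) yields a cylinder for `X`: the comparison
morphism `w'` is a weak equivalence, `i` is a cofibration, there is a unique morphism
`s : Z ⟶ X` with `i ≫ s` the fold map and `w' ≫ s = p' ≫ w`, and this `s` is a weak
equivalence. -/
theorem pushout_cylinder_along_weq
    {C : Type u} [Category.{v} C] [HasFiniteLimits C] [HasFiniteColimits C]
    (M : ModelStructure C) (hproper : M.LeftProper)
    (hcoprod : ∀ ⦃A B : C⦄ (w : A ⟶ B), M.weq w → M.weq (coprod.map w w))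
    {X' X : C} (w : X' ⟶ X) (hw : M.weq w) (cyl : M.Cylinder X')
    {Z : C} (i : (X ⨿ X) ⟶ Z) (w' : cyl.Z ⟶ Z)
    (hpo : IsPushout (coprod.map w w) cyl.ins i w') :
    M.weq w' ∧ M.cof i ∧
    (∃! s : Z ⟶ X, i ≫ s = coprod.desc (𝟙 X) (𝟙 X) ∧ w' ≫ s = cyl.p ≫ w) ∧
    (∀ s : Z ⟶ X, i ≫ s = coprod.desc (𝟙 X) (𝟙 X) → w' ≫ s = cyl.p ≫ w → M.weq s) := by
  have hw' : M.weq w' := hproper _ _ _ _ hpo cyl.cof_ins (hcoprod w hw)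
  have hcomm0 : coprod.map w w ≫ coprod.desc (𝟙 X) (𝟙 X) = cyl.ins ≫ (cyl.p ≫ w) := by
    rw [← Category.assoc, cyl.ins_p]
    simp
  refine ⟨hw', ?_, ?_, ?_⟩
  · obtain ⟨W, j, q, hj, hq, hqw, hjq⟩ := M.factor_cof_triv_fib i
    have hlift : HasLiftingProperty cyl.ins q := M.lift_of_weq_fib _ _ cyl.cof_ins hq hqw
    have sq' : (coprod.map w w ≫ j) ≫ q = cyl.ins ≫ w' := by
      rw [Category.assoc, hjq, hpo.w]
    obtain ⟨⟨l⟩⟩ := hlift.sq_hasLift (CommSq.mk sq')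
    have hcomm : coprod.map w w ≫ j = cyl.ins ≫ l.l := l.fac_left.symm
    have h1 : i ≫ hpo.desc j l.l hcomm = j := hpo.inl_desc _ _ _
    have h2 : hpo.desc j l.l hcomm ≫ q = 𝟙 Z := by
      apply hpo.hom_ext
      · rw [← Category.assoc, h1, hjq, Category.comp_id]
      · rw [← Category.assoc, hpo.inr_desc, l.fac_right, Category.comp_id]
    exact M.cof_retract i j (𝟙 _) (𝟙 _) (hpo.desc j l.l hcomm) q
      (Category.comp_id _) h2 (by rw [Category.id_comp, h1])
      (by rw [Category.id_comp, hjq]) hj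
  · refine ⟨hpo.desc (coprod.desc (𝟙 X) (𝟙 X)) (cyl.p ≫ w) hcomm0,
      ⟨hpo.inl_desc _ _ _, hpo.inr_desc _ _ _⟩, ?_⟩
    rintro s ⟨hs1, hs2⟩
    apply hpo.hom_ext
    · rw [hs1, hpo.inl_desc]
    · rw [hs2, hpo.inr_desc]
  · intro s hs1 hs2
    exact M.weq_of_comp_left w' s hw' (hs2 ▸ M.weq_comp cyl.p w cyl.weq_p hw)
end

section
/- Let M be a left proper model category in which w ⊔ w is a weak equivalence for every weak equivalence w. Let X, Y be objects of M, let f, g : X → Y be parallel morphisms, and let w : X' → X be a weak equivalence such that w ≫ f and w ≫ g are cylinder homotopic. Then f and g are cylinder homotopic. -/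
open CategoryTheory CategoryTheory.Limits

universe v u

/-- Cofibrations are stable under pushout. -/
lemma ModelStructure.cof_pushout
    {C : Type u} [Category.{v} C] [HasFiniteLimits C] [HasFiniteColimits C]
    (M : ModelStructure C) {A B X P : C} (f : A ⟶ X) (i : A ⟶ B) (i' : X ⟶ P) (k : B ⟶ P)
    (hpo : IsPushout f i i' k) (hi : M.cof i) : M.cof i' := by
  -- first: `i'` lifts against trivial fibrations
  have hlift : ∀ {Z W : C} (p : Z ⟶ W), M.fib p → M.weq p →
      ∀ (u : X ⟶ Z) (v : P ⟶ W), i' ≫ v = u ≫ p →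
      ∃ d : P ⟶ Z, i' ≫ d = u ∧ d ≫ p = v := by
    intro Z W p hpf hpw u v hsq
    haveI := M.lift_of_weq_fib i p hi hpf hpw
    have hcomm : i ≫ (k ≫ v) = (f ≫ u) ≫ p := by
      rw [← Category.assoc, ← hpo.w, Category.assoc, hsq, Category.assoc]
    have sq : CommSq (f ≫ u) i p (k ≫ v) := ⟨hcomm.symm⟩
    have hl1 : i ≫ sq.lift = f ≫ u := sq.fac_left
    have hl2 : sq.lift ≫ p = k ≫ v := sq.fac_right
    set l := sq.lift
    refine ⟨hpo.desc u l hl1.symm, hpo.inl_desc _ _ _, ?_⟩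
    apply hpo.hom_ext
    · rw [← Category.assoc, hpo.inl_desc, hsq]
    · rw [← Category.assoc, hpo.inr_desc, hl2]
  obtain ⟨Zc, c, q, hc, hqf, hqw, hcq⟩ := M.factor_cof_triv_fib i'
  obtain ⟨l, hl1, hl2⟩ := hlift q hqf hqw c (𝟙 P) (by rw [Category.comp_id, hcq])
  exact M.cof_retract i' c (𝟙 X) (𝟙 X) l q (Category.id_comp _) hl2
    (by rw [Category.id_comp, hl1]) (by rw [Category.id_comp]; exact hcq) hc

open ModelStructure in
/-- In a left proper model category in which `w ⊔ w` is a weak equivalence for every weak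
equivalence `w`: if `w : X' ⟶ X` is a weak equivalence and `w ≫ f` is cylinder homotopic to
`w ≫ g`, then `f` is cylinder homotopic to `g`. -/
theorem cylinderHomotopic_of_precomp_weq
    {C : Type u} [Category.{v} C] [HasFiniteLimits C] [HasFiniteColimits C]
    (M : ModelStructure C) (hproper : M.LeftProper)
    (hcoprod : ∀ ⦃A B : C⦄ (v : A ⟶ B), M.weq v → M.weq (coprod.map v v))
    {X' X Y : C} (f g : X ⟶ Y) (w : X' ⟶ X) (hw : M.weq w)
    (h : M.CylinderHomotopic (w ≫ f) (w ≫ g)) :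
    M.CylinderHomotopic f g := by
  obtain ⟨cyl, H, hH1, hH2⟩ := h
  -- pushout of the cylinder along `w ⊔ w`
  set Q := pushout (coprod.map w w) cyl.ins with hQ
  have hpo : IsPushout (coprod.map w w) cyl.ins
      (pushout.inl (coprod.map w w) cyl.ins) (pushout.inr (coprod.map w w) cyl.ins) :=
    IsPushout.of_hasPushout _ _
  have hcofj : M.cof (pushout.inl (coprod.map w w) cyl.ins) :=
    M.cof_pushout (coprod.map w w) cyl.ins _ _ hpo cyl.cof_ins
  have hwequ : M.weq (pushout.inr (coprod.map w w) cyl.ins) :=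
    hproper (coprod.map w w) cyl.ins _ _ hpo cyl.cof_ins (hcoprod w hw)
  -- the projection of the new cylinder
  have hpcomm : coprod.map w w ≫ coprod.desc (𝟙 X) (𝟙 X) = cyl.ins ≫ cyl.p ≫ w := by
    rw [← Category.assoc, cyl.ins_p]
    ext <;> simp
  set p : Q ⟶ X := pushout.desc (coprod.desc (𝟙 X) (𝟙 X)) (cyl.p ≫ w) hpcomm with hp
  have hwp : M.weq p := by
    apply M.weq_of_comp_left (pushout.inr (coprod.map w w) cyl.ins) p hwequ
    rw [hp, pushout.inr_desc]
    exact M.weq_comp _ _ cyl.weq_p hw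
  -- the homotopy
  have hHcomm : coprod.map w w ≫ coprod.desc f g = cyl.ins ≫ H := by
    ext
    · rw [hH1, ← Category.assoc, coprod.inl_map, Category.assoc, coprod.inl_desc]
    · rw [hH2, ← Category.assoc, coprod.inr_map, Category.assoc, coprod.inr_desc]
  refine ⟨⟨Q, pushout.inl _ _, p, hcofj, hwp, by rw [hp, pushout.inl_desc]⟩,
    pushout.desc (coprod.desc f g) H hHcomm, ?_, ?_⟩
  · rw [pushout.inl_desc, coprod.inl_desc]
  · rw [pushout.inl_desc, coprod.inr_desc]
end

section
/- There do not exist a natural number k, ℤ/4ℤ-linear maps ins₀, ins₁ : ℤ/4ℤ → (ℤ/4ℤ)^k with 2 • ins₀ = 2 • ins₁, and a ℤ/4ℤ-linear map H : (ℤ/4ℤ)^k → ℤ/4ℤ × ℤ/2ℤ such that H ∘ ins₀ = f and H ∘ ins₁ = g, where f, g : ℤ/4ℤ → ℤ/4ℤ × ℤ/2ℤ are the linear maps f(x) = (x, 0) and g(x) = (x, x mod 2). (That is, the two morphisms (1 0) and (1 1) from (ℤ/4ℤ, 2) to (ℤ/4ℤ ⊕ ℤ/2ℤ, (2 0)) in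 the category of ℤ/4ℤ-modules under ℤ/4ℤ are not cylinder homotopic.) -/
lemma zmod4_two_mul (x : ZMod 4) (hx : 2 * x = 0) : ∃ y : ZMod 4, x = 2 * y := by
  revert hx; revert x; decide

/-- `ℤ/2ℤ` as a `ℤ/4ℤ`-algebra (hence a `ℤ/4ℤ`-module) via the canonical surjection
`ℤ/4ℤ → ℤ/2ℤ`. -/
noncomputable instance : Algebra (ZMod 4) (ZMod 2) :=
  (ZMod.castHom (show 2 ∣ 4 by norm_num) (ZMod 2)).toAlgebra

/-- The two morphisms `(1 0), (1 1) : ℤ/4ℤ → ℤ/4ℤ ⊕ ℤ/2ℤ` (namely `x ↦ (x, 0)` and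
`x ↦ (x, x mod 2)`) are not cylinder homotopic: there is no `k`, no linear maps
`ins₀, ins₁ : ℤ/4ℤ → (ℤ/4ℤ)^k` with `2 • ins₀ = 2 • ins₁` and no linear map
`H : (ℤ/4ℤ)^k → ℤ/4ℤ ⊕ ℤ/2ℤ` with `H ∘ ins₀ = (1 0)` and `H ∘ ins₁ = (1 1)`. -/
theorem zmod4_not_cylinder_homotopic :
    ¬ ∃ (k : ℕ) (ins₀ ins₁ : ZMod 4 →ₗ[ZMod 4] (Fin k → ZMod 4))
        (H : (Fin k → ZMod 4) →ₗ[ZMod 4] (ZMod 4 × ZMod 2)),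
      (2 : ZMod 4) • ins₀ = (2 : ZMod 4) • ins₁ ∧
      H ∘ₗ ins₀ = LinearMap.prod LinearMap.id 0 ∧
      H ∘ₗ ins₁ = LinearMap.prod LinearMap.id (Algebra.linearMap (ZMod 4) (ZMod 2)) := by
  rintro ⟨k, i0, i1, H, h2, h0, h1⟩
  set a := i0 1 with ha
  set b := i1 1 with hb
  have hab : (2 : ZMod 4) • a = (2 : ZMod 4) • b := by
    have := LinearMap.congr_fun h2 1
    simpa using this
  set d : Fin k → ZMod 4 := a - b with hd
  have hd2 : ∀ i, 2 * d i = 0 := by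
    intro i
    have := congrFun hab i
    simp only [Pi.smul_apply, smul_eq_mul] at this
    simp [hd, mul_sub, this]
  choose c hc using fun i => zmod4_two_mul (d i) (hd2 i)
  have hdc : d = (2 : ZMod 4) • c := by
    funext i; simp [hc i, Pi.smul_apply, smul_eq_mul]
  have hHa : H a = (1, 0) := by
    have := LinearMap.congr_fun h0 1
    simpa [ha] using this
  have hHb : H b = (1, 1) := by
    have := LinearMap.congr_fun h1 1
    simpa [hb, Algebra.linearMap_apply] using this
  have hHd : H d = (0, 1) := by
    have : H d = H a - H b := by simp [hd, map_sub]
    rw [this, hHa, hHb]; decide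
  have hHd2 : H d = (2 : ZMod 4) • H c := by
    rw [hdc, map_smul]
  have : ((0, 1) : ZMod 4 × ZMod 2).2 = ((2 : ZMod 4) • H c).2 := by
    rw [← hHd, ← hHd2]
  simp only [Prod.smul_snd] at this
  rw [Algebra.smul_def] at this
  have h20 : (algebraMap (ZMod 4) (ZMod 2)) 2 = 0 := by decide
  rw [h20, zero_mul] at this
  exact one_ne_zero this
end
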